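/- Let k be a field of characteristic 2, n ≥ 2, let b, c ∈ k be nonzero, and let m be an integer with 1 ≤ m ≤ n/2. Then Inn_{L_{m,b²,b}} is isomorphic to Inn_{L_{m,c²,c}}: there exist C ∈ GL(n,k) and a nonzero t ∈ k (namely t = b/c) with C·L_{m,b²,b}·C⁻¹ = t·L_{m,c²,c}. -/

import Mathlib

/-- The n×n block-diagonal matrix L_{m,c²,c}: the first m diagonal 2×2 blocks
are !![0,1;c²,0] and the remaining n−2m diagonal entries equal c. -/
def Lmc {k : Type*} [Field k] (n m : ℕ) (c : k) : Matrix (Fin n) (Fin n) k :=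
  Matrix.of fun i j =>
    if (i : ℕ) < 2 * m then
      if (i : ℕ) % 2 = 0 ∧ (j : ℕ) = (i : ℕ) + 1 then 1
      else if (i : ℕ) % 2 = 1 ∧ (j : ℕ) + 1 = (i : ℕ) then c ^ 2
      else 0
    else if j = i then c else 0

/-- Let k be a field of characteristic 2, n ≥ 2, b, c ∈ k
nonzero, and 1 ≤ m ≤ n/2. Then Inn_{L_{m,b²,b}} is isomorphic to
Inn_{L_{m,c²,c}}: there exist C ∈ GL(n,k) and nonzero t ∈ k (namely t = b/c)
with C·L_{m,b²,b}·C⁻¹ = t·L_{m,c²,c}. -/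
theorem stmt_14 {k : Type*} [Field k] [CharP k 2] {n : ℕ} (hn : 2 ≤ n)
    (b c : k) (hb : b ≠ 0) (hc : c ≠ 0) (m : ℕ) (hm1 : 1 ≤ m) (hm2 : 2 * m ≤ n) :
    ∃ C : (Matrix (Fin n) (Fin n) k)ˣ, ∃ t : k, t ≠ 0 ∧
      (C : Matrix (Fin n) (Fin n) k) * Lmc n m b *
        (↑C⁻¹ : Matrix (Fin n) (Fin n) k) = t • Lmc n m c := by
  classical
  set d : Fin n → k := fun i =>
    if (i : ℕ) < 2 * m then (if (i : ℕ) % 2 = 0 then b else c) else 1 with hd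
  have hdne : ∀ i, d i ≠ 0 := by
    intro i
    simp only [hd]
    split
    · split <;> assumption
    · exact one_ne_zero
  refine ⟨⟨Matrix.diagonal d, Matrix.diagonal (fun i => (d i)⁻¹), ?_, ?_⟩,
    b / c, div_ne_zero hb hc, ?_⟩
  · rw [Matrix.diagonal_mul_diagonal]
    convert Matrix.diagonal_one with i
    exact mul_inv_cancel₀ (hdne i)
  · rw [Matrix.diagonal_mul_diagonal]
    convert Matrix.diagonal_one with i
    exact inv_mul_cancel₀ (hdne i)
  · show Matrix.diagonal d * Lmc n m b * Matrix.diagonal (fun i => (d i)⁻¹) = _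
    ext i j
    simp only [Matrix.mul_diagonal, Matrix.diagonal_mul, Matrix.smul_apply,
      smul_eq_mul, Lmc, Matrix.of_apply, hd]
    by_cases hi : (i : ℕ) < 2 * m
    · simp only [hi, if_true]
      by_cases h1 : (i : ℕ) % 2 = 0 ∧ (j : ℕ) = (i : ℕ) + 1
      · have hj : (j : ℕ) < 2 * m := by omega
        have hj2 : (j : ℕ) % 2 = 1 := by omega
        have h3 : (i : ℕ) + 1 < 2 * m := by omega
        have h4 : ¬ (((i : ℕ) + 1) % 2 = 0) := by omega
        simp only [h1, if_true, hj, hj2, h3, h4, if_false, and_self]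
        field_simp
      · simp only [h1, if_false]
        by_cases h2 : (i : ℕ) % 2 = 1 ∧ (j : ℕ) + 1 = (i : ℕ)
        · have hj : (j : ℕ) < 2 * m := by omega
          have hj2 : (j : ℕ) % 2 = 0 := by omega
          have hi2 : ¬ ((i : ℕ) % 2 = 0) := by omega
          simp only [h2, if_true, hj, hj2, hi, hi2, if_false, and_self, one_ne_zero]
          field_simp
        · simp only [h2, if_false, mul_zero, zero_mul]
    · simp only [hi, if_false]
      by_cases hij : j = i
      · subst hij
        simp only [if_true, hi, if_false]
        field_simp
      · simp only [hij, if_false, mul_zero, zero_mul]
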